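/- Let Q⋆ be a fixed point of the average Bellman operator T (i.e. T Q⋆ = Q⋆). Let λ ∈ [0,1], let Q¹, …, Qⁿ : S × A → ℝ be arbitrary, set Q̄ = (1/n) Σ_{k=1}^n Q^k and Q̄⁺ = (1−λ) Q̄ + (λ/n) Σ_{k=1}^n T_k Q^k. Then ‖Q̄⁺ − Q⋆‖∞ ≤ (1 − (1−γ)λ) ‖Q̄ − Q⋆‖∞ + (γλ/n) Σ_{k=1}^n ‖Q^k − Q̄‖∞. -/
import Mathlib

open Finset

lemma sup'_abs_sub_le_aux {A : Type*} [Fintype A] [Nonempty A] (f g : A → ℝ) (c : ℝ)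
    (h : ∀ a, |f a - g a| ≤ c) :
    |Finset.univ.sup' Finset.univ_nonempty f - Finset.univ.sup' Finset.univ_nonempty g| ≤ c := by
  rw [abs_sub_le_iff]
  constructor
  · rw [sub_le_iff_le_add]
    apply Finset.sup'_le
    intro a _
    have h1 := (abs_le.1 (h a)).2
    have h2 : g a ≤ Finset.univ.sup' Finset.univ_nonempty g := Finset.le_sup' g (Finset.mem_univ a)
    linarith
  · rw [sub_le_iff_le_add]
    apply Finset.sup'_le
    intro a _
    have h1 := (abs_le.1 (h a)).1
    have h2 : f a ≤ Finset.univ.sup' Finset.univ_nonempty f := Finset.le_sup' f (Finset.mem_univ a)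
    linarith

theorem stmt_6 {S A : Type*} [Fintype S] [Fintype A] [Nonempty S] [Nonempty A]
    (γ : ℝ) (hγ0 : 0 ≤ γ) (hγ1 : γ < 1)
    (n : ℕ) (hn : 1 ≤ n)
    (R : S → A → ℝ)
    (P : Fin n → S → A → S → ℝ)
    (hPpos : ∀ k s a s', 0 ≤ P k s a s')
    (hPsum : ∀ k s a, ∑ s', P k s a s' = 1)
    (Tk : Fin n → (S × A → ℝ) → (S × A → ℝ))
    (hTk : ∀ k Q sa, Tk k Q sa = R sa.1 sa.2
        + γ * ∑ s', P k sa.1 sa.2 s' *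
          (Finset.univ.sup' Finset.univ_nonempty fun a' => Q (s', a')))
    (Qstar : S × A → ℝ)
    (hfix : ∀ sa, Qstar sa = (1 / (n : ℝ)) * ∑ k, Tk k Qstar sa)
    (lam : ℝ) (hlam0 : 0 ≤ lam) (hlam1 : lam ≤ 1)
    (Q : Fin n → S × A → ℝ)
    (Qbar : S × A → ℝ) (hQbar : Qbar = (1 / (n : ℝ)) • ∑ k, Q k)
    (Qbarp : S × A → ℝ)
    (hQbarp : Qbarp = (1 - lam) • Qbar + (lam / (n : ℝ)) • ∑ k, Tk k (Q k)) :
    ‖Qbarp - Qstar‖ ≤ (1 - (1 - γ) * lam) * ‖Qbar - Qstar‖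
      + (γ * lam / (n : ℝ)) * ∑ k, ‖Q k - Qbar‖ := by
  have hn0 : (0:ℝ) < (n:ℝ) := by exact_mod_cast Nat.lt_of_lt_of_le Nat.zero_lt_one hn
  have hn' : (n:ℝ) ≠ 0 := ne_of_gt hn0
  -- contraction of each Tk
  have contract : ∀ (k : Fin n) (Q1 Q2 : S × A → ℝ), ‖Tk k Q1 - Tk k Q2‖ ≤ γ * ‖Q1 - Q2‖ := by
    intro k Q1 Q2
    have hnn : 0 ≤ γ * ‖Q1 - Q2‖ := mul_nonneg hγ0 (norm_nonneg _)
    rw [pi_norm_le_iff_of_nonneg hnn]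
    intro sa
    have hM : ∀ s' : S,
        |(Finset.univ.sup' Finset.univ_nonempty fun a' => Q1 (s', a')) -
         (Finset.univ.sup' Finset.univ_nonempty fun a' => Q2 (s', a'))| ≤ ‖Q1 - Q2‖ := by
      intro s'
      apply sup'_abs_sub_le_aux
      intro a
      have := norm_le_pi_norm (Q1 - Q2) (s', a)
      simpa [Real.norm_eq_abs] using this
    have hcalc : (Tk k Q1 - Tk k Q2) sa = γ * ∑ s', P k sa.1 sa.2 s' *
        ((Finset.univ.sup' Finset.univ_nonempty fun a' => Q1 (s', a')) -
         (Finset.univ.sup' Finset.univ_nonempty fun a' => Q2 (s', a'))) := by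
      rw [Pi.sub_apply, hTk, hTk, add_sub_add_left_eq_sub, ← mul_sub, ← Finset.sum_sub_distrib]
      congr 1
      apply Finset.sum_congr rfl
      intro s' _
      ring
    rw [Real.norm_eq_abs, hcalc, abs_mul, abs_of_nonneg hγ0]
    calc γ * |∑ s', P k sa.1 sa.2 s' * _| ≤ γ * ∑ s', |P k sa.1 sa.2 s' *
          ((Finset.univ.sup' Finset.univ_nonempty fun a' => Q1 (s', a')) -
           (Finset.univ.sup' Finset.univ_nonempty fun a' => Q2 (s', a')))| := by
          gcongr
          exact Finset.abs_sum_le_sum_abs _ _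
      _ ≤ γ * ∑ s', P k sa.1 sa.2 s' * ‖Q1 - Q2‖ := by
          gcongr with s' _
          rw [abs_mul, abs_of_nonneg (hPpos k sa.1 sa.2 s')]
          exact mul_le_mul_of_nonneg_left (hM s') (hPpos k sa.1 sa.2 s')
      _ = γ * ‖Q1 - Q2‖ := by rw [← Finset.sum_mul, hPsum, one_mul]
  have hstar : Qstar = (1 / (n:ℝ)) • ∑ k, Tk k Qstar := by
    funext sa
    simpa [Finset.sum_apply] using hfix sa
  have hdecomp : Qbarp - Qstar
      = (1 - lam) • (Qbar - Qstar) + (lam / (n:ℝ)) • ∑ k, (Tk k (Q k) - Tk k Qstar) := by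
    funext sa
    have h := hfix sa
    simp only [hQbarp, Pi.sub_apply, Pi.add_apply, Pi.smul_apply, Finset.sum_apply,
      smul_eq_mul, Finset.sum_sub_distrib]
    rw [h]
    field_simp
    ring
  have step1 : ‖Qbarp - Qstar‖ ≤ (1 - lam) * ‖Qbar - Qstar‖
      + (lam / (n:ℝ)) * ∑ k, ‖Tk k (Q k) - Tk k Qstar‖ := by
    rw [hdecomp]
    refine (norm_add_le _ _).trans ?_
    rw [norm_smul, norm_smul, Real.norm_eq_abs, Real.norm_eq_abs,
      abs_of_nonneg (by linarith : (0:ℝ) ≤ 1 - lam),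
      abs_of_nonneg (by positivity : (0:ℝ) ≤ lam / (n:ℝ))]
    gcongr
    exact norm_sum_le _ _
  have step2 : ∀ k : Fin n, ‖Tk k (Q k) - Tk k Qstar‖
      ≤ γ * ‖Q k - Qbar‖ + γ * ‖Qbar - Qstar‖ := by
    intro k
    refine (contract k _ _).trans ?_
    rw [← mul_add]
    gcongr
    calc ‖Q k - Qstar‖ = ‖(Q k - Qbar) + (Qbar - Qstar)‖ := by rw [sub_add_sub_cancel]
      _ ≤ ‖Q k - Qbar‖ + ‖Qbar - Qstar‖ := norm_add_le _ _
  have hsum : ∑ k, ‖Tk k (Q k) - Tk k Qstar‖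
      ≤ γ * ∑ k, ‖Q k - Qbar‖ + (n:ℝ) * (γ * ‖Qbar - Qstar‖) := by
    calc ∑ k, ‖Tk k (Q k) - Tk k Qstar‖
        ≤ ∑ k : Fin n, (γ * ‖Q k - Qbar‖ + γ * ‖Qbar - Qstar‖) :=
          Finset.sum_le_sum fun k _ => step2 k
      _ = γ * ∑ k, ‖Q k - Qbar‖ + (n:ℝ) * (γ * ‖Qbar - Qstar‖) := by
          rw [Finset.sum_add_distrib, Finset.sum_const, ← Finset.mul_sum]
          simp [nsmul_eq_mul]
  have hlf : 0 ≤ lam / (n:ℝ) := by positivity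
  calc ‖Qbarp - Qstar‖ ≤ (1 - lam) * ‖Qbar - Qstar‖
        + (lam / (n:ℝ)) * (γ * ∑ k, ‖Q k - Qbar‖ + (n:ℝ) * (γ * ‖Qbar - Qstar‖)) := by
        refine step1.trans ?_
        gcongr
    _ = (1 - (1 - γ) * lam) * ‖Qbar - Qstar‖
        + (γ * lam / (n:ℝ)) * ∑ k, ‖Q k - Qbar‖ := by
        field_simp
        ring
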